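/- Let A be a finite nontrivial temporal Heyting algebra (0 ≠ 1). Then A is simple (its only congruences are the diagonal relation and the all-relation) if and only if the only ◆-compatible elements of A are 0 and 1. -/

import Mathlib

/-- A congruence of a temporal Heyting algebra. -/
def IsCong {A : Type*} [HeytingAlgebra A] (box dia : A → A) (θ : A → A → Prop) : Prop :=
  Equivalence θ ∧
  (∀ a b c d : A, θ a b → θ c d → θ (a ⊓ c) (b ⊓ d)) ∧
  (∀ a b c d : A, θ a b → θ c d → θ (a ⊔ c) (b ⊔ d)) ∧
  (∀ a b c d : A, θ a b → θ c d → θ (a ⇨ c) (b ⇨ d)) ∧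
  (∀ a b : A, θ a b → θ (box a) (box b)) ∧
  (∀ a b : A, θ a b → θ (dia a) (dia b))

/-- A ◆-compatible element of a temporal Heyting algebra. -/
def DiaCompat {A : Type*} [HeytingAlgebra A] (dia : A → A) (a : A) : Prop :=
  ∀ b : A, a ⊓ dia b ≤ dia (a ⊓ b)

section Aux

variable {A : Type*} [HeytingAlgebra A] {box dia : A → A}

private lemma dia_mono (hadj : ∀ a b : A, dia a ≤ b ↔ a ≤ box b)
    {a b : A} (h : a ≤ b) : dia a ≤ dia b :=
  (hadj _ _).2 (h.trans ((hadj b (dia b)).1 le_rfl))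

private lemma himp_step {x a b c d : A} (h1 : x ⊓ a = x ⊓ b) (h2 : x ⊓ c = x ⊓ d) :
    x ⊓ (a ⇨ c) ≤ b ⇨ d := by
  rw [le_himp_iff]
  calc x ⊓ (a ⇨ c) ⊓ b = x ⊓ b ⊓ (a ⇨ c) := by rw [inf_right_comm]
    _ = x ⊓ a ⊓ (a ⇨ c) := by rw [h1]
    _ = x ⊓ (a ⊓ (a ⇨ c)) := by rw [inf_assoc]
    _ = x ⊓ (a ⊓ c) := by rw [inf_himp]
    _ ≤ x ⊓ c := inf_le_inf_left x inf_le_right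
    _ = x ⊓ d := h2
    _ ≤ d := inf_le_right

private lemma box_step (hbox_meet : ∀ a b : A, box (a ⊓ b) = box a ⊓ box b)
    (hbox_incr : ∀ a : A, a ≤ box a) (x a : A) :
    x ⊓ box a = x ⊓ box (x ⊓ a) := by
  rw [hbox_meet, ← inf_assoc, inf_eq_left.2 (hbox_incr x)]

/-- The congruence generated by a ◆-compatible element. -/
private lemma cong_of_diaCompat (hbox_meet : ∀ a b : A, box (a ⊓ b) = box a ⊓ box b)
    (hbox_incr : ∀ a : A, a ≤ box a)
    (hadj : ∀ a b : A, dia a ≤ b ↔ a ≤ box b)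
    {x : A} (hx : DiaCompat dia x) :
    IsCong box dia (fun a b : A => x ⊓ a = x ⊓ b) := by
  refine ⟨⟨fun _ => rfl, fun h => h.symm, fun h h' => h.trans h'⟩, ?_, ?_, ?_, ?_, ?_⟩
  · intro a b c d h1 h2
    rw [inf_inf_distrib_left, h1, h2, ← inf_inf_distrib_left]
  · intro a b c d h1 h2
    simp only [inf_sup_left, h1, h2]
  · intro a b c d h1 h2
    refine le_antisymm (le_inf inf_le_left (himp_step h1 h2))
      (le_inf inf_le_left (himp_step h1.symm h2.symm))
  · intro a b h
    rw [box_step hbox_meet hbox_incr x a, box_step hbox_meet hbox_incr x b, h]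
  · intro a b h
    have key : ∀ u v : A, x ⊓ u = x ⊓ v → x ⊓ dia u ≤ x ⊓ dia v := by
      intro u v huv
      refine le_inf inf_le_left ?_
      calc x ⊓ dia u ≤ dia (x ⊓ u) := hx u
        _ = dia (x ⊓ v) := by rw [huv]
        _ ≤ dia v := dia_mono hadj inf_le_right
    exact le_antisymm (key a b h) (key b a h.symm)

end Aux

/-- A finite nontrivial temporal Heyting algebra is simple iff its only
◆-compatible elements are `⊥` and `⊤`. -/
theorem stmt18 {A : Type*} [HeytingAlgebra A] [Finite A] (box dia : A → A)
    (hbox_meet : ∀ a b : A, box (a ⊓ b) = box a ⊓ box b)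
    (hbox_incr : ∀ a : A, a ≤ box a)
    (hbox_front : ∀ a b : A, box a ≤ b ⊔ (b ⇨ a))
    (hadj : ∀ a b : A, dia a ≤ b ↔ a ≤ box b)
    (hnt : (⊥ : A) ≠ ⊤) :
    (∀ θ : A → A → Prop, IsCong box dia θ →
        (θ = fun a b : A => a = b) ∨ (θ = fun _ _ : A => True)) ↔
    {a : A | DiaCompat dia a} = {⊥, ⊤} := by
  constructor
  · -- simple → only ⊥, ⊤ are ◆-compatible
    intro hsimple
    ext x
    simp only [Set.mem_setOf_eq, Set.mem_insert_iff, Set.mem_singleton_iff]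
    constructor
    · intro hx
      rcases hsimple _ (cong_of_diaCompat hbox_meet hbox_incr hadj hx) with heq | hall
      · right
        have h : (x ⊓ x = x ⊓ ⊤) = (x = ⊤) := congrFun (congrFun heq x) ⊤
        exact cast h (by simp)
      · left
        have h : (x ⊓ ⊥ = x ⊓ ⊤) = True := congrFun (congrFun hall (⊥ : A)) ⊤
        have : x ⊓ ⊥ = x ⊓ ⊤ := cast h.symm trivial
        simpa using this.symm
    · rintro (rfl | rfl) b <;> simp
  · -- only ⊥, ⊤ ◆-compatible → simple
    intro hset θ hθ
    obtain ⟨heqv, hmeet, hjoin, himp, hbox, hdia⟩ := hθ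
    set F : Set A := {y | θ y ⊤} with hF
    have hFne : F.Nonempty := ⟨⊤, heqv.refl ⊤⟩
    obtain ⟨f, hfF, hfmin'⟩ := Set.Finite.exists_minimalFor id F (Set.toFinite F) hFne
    have hfmin : ∀ a' ∈ F, id a' ≤ id f → id f = id a' := fun a' ha' h => le_antisymm (hfmin' ha' h) h
    -- f is a least element of F
    have hle : ∀ y ∈ F, f ≤ y := by
      intro y hy
      have hfy : f ⊓ y ∈ F := by
        have := hmeet f ⊤ y ⊤ hfF hy
        simpa [hF] using this
      have := hfmin _ hfy inf_le_left
      simp only [id_eq] at this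
      exact le_of_inf_eq this.symm
    -- f is ◆-compatible
    have hfc : DiaCompat dia f := by
      intro b
      have h1 : θ (f ⊓ b) b := by
        have := hmeet f ⊤ b b hfF (heqv.refl b)
        simpa using this
      have h2 : θ (dia (f ⊓ b)) (dia b) := hdia _ _ h1
      have h3 : θ (dia b ⇨ dia (f ⊓ b)) (dia b ⇨ dia b) :=
        himp _ _ _ _ (heqv.refl (dia b)) h2
      have h4 : (dia b ⇨ dia (f ⊓ b)) ∈ F := by
        simpa [hF] using h3
      have := hle _ h4
      rwa [le_himp_iff] at this
    have hf2 : f = ⊥ ∨ f = ⊤ := by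
      have : f ∈ ({⊥, ⊤} : Set A) := hset ▸ hfc
      simpa using this
    rcases hf2 with rfl | rfl
    · -- θ relates ⊥ and ⊤, hence is everything
      right
      have hbt : θ ⊥ ⊤ := hfF
      have htop : ∀ a : A, θ a ⊤ := by
        intro a
        have := hjoin a a ⊥ ⊤ (heqv.refl a) hbt
        simpa using this
      funext a b
      simp only [eq_iff_iff, iff_true]
      exact heqv.trans (htop a) (heqv.symm (htop b))
    · -- F = {⊤}, θ is the diagonal
      left
      funext a b
      simp only [eq_iff_iff]
      constructor
      · intro hab
        have hab' : θ b a := heqv.symm hab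
        have h1 : (a ⇨ b) ∈ F := by
          have := himp a b b b hab (heqv.refl b)
          simpa [hF] using this
        have h2 : (b ⇨ a) ∈ F := by
          have := himp b a a a hab' (heqv.refl a)
          simpa [hF] using this
        have l1 : a ≤ b := by
          have := hle _ h1
          rwa [top_le_iff, himp_eq_top_iff] at this
        have l2 : b ≤ a := by
          have := hle _ h2
          rwa [top_le_iff, himp_eq_top_iff] at this
        exact le_antisymm l1 l2
      · rintro rfl; exact heqv.refl a
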